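/- For every prime quadratic module M in M_n(R), the set p(supp M) of (1,1)-entries of elements of supp M = M ∩ (−M) is a prime ideal in R. -/

import Mathlib

open Matrix

/-- A quadratic module in `M_n(R)`. -/
def IsQM {n : ℕ} {R : Type*} [CommRing R] (M : Set (Matrix (Fin n) (Fin n) R)) : Prop :=
  (∀ A ∈ M, A.IsSymm) ∧ (1 : Matrix (Fin n) (Fin n) R) ∈ M ∧
  (∀ a ∈ M, ∀ b ∈ M, a + b ∈ M) ∧
  ∀ (A : Matrix (Fin n) (Fin n) R), ∀ m ∈ M, Aᵀ * m * A ∈ M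

/-- A prime quadratic module in `M_n(R)`. -/
def IsPrimeQM {n : ℕ} {R : Type*} [CommRing R] (M : Set (Matrix (Fin n) (Fin n) R)) : Prop :=
  IsQM M ∧ -(1 : Matrix (Fin n) (Fin n) R) ∉ M ∧
  ∀ (A : Matrix (Fin n) (Fin n) R) (r : R), A.IsSymm → r ^ 2 • A ∈ M →
    A ∈ M ∨ r • (1 : Matrix (Fin n) (Fin n) R) ∈ M ∩ (-M)

theorem stmt9 {n : ℕ} [NeZero n] {R : Type*} [CommRing R]
    (M : Set (Matrix (Fin n) (Fin n) R)) (hM : IsPrimeQM M) :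
    ∃ J : Ideal R, (J : Set R) = (fun A : Matrix (Fin n) (Fin n) R => A 0 0) '' (M ∩ (-M)) ∧
      J.IsPrime := by
  obtain ⟨⟨hsymm, hone, hadd, hcong⟩, hproper, hprime⟩ := hM
  -- closure of M under multiplication by squares of scalars
  have hsq : ∀ (r : R), ∀ m ∈ M, r ^ 2 • m ∈ M := by
    intro r m hm
    have h := hcong (r • (1 : Matrix (Fin n) (Fin n) R)) m hm
    have e : (r • (1 : Matrix (Fin n) (Fin n) R))ᵀ * m * (r • 1) = r ^ 2 • m := by
      simp [Matrix.transpose_smul, smul_mul_assoc, Matrix.mul_smul, smul_smul, pow_two]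
    rwa [e] at h
  have hzero : (0 : Matrix (Fin n) (Fin n) R) ∈ M := by
    have h := hcong 0 1 hone
    simpa using h
  -- crux: if ±s•1 ∈ M then -(s^2)•1 ∈ M
  have hcrux : ∀ s : R, s • (1 : Matrix (Fin n) (Fin n) R) ∈ M ∩ -M →
      -(s ^ 2 • (1 : Matrix (Fin n) (Fin n) R)) ∈ M := by
    intro s hs
    have h1 : s • (1 : Matrix (Fin n) (Fin n) R) ∈ M := hs.1
    have h2 : -(s • (1 : Matrix (Fin n) (Fin n) R)) ∈ M := Set.mem_neg.mp hs.2
    have t1 : s ^ 2 • (1 : Matrix (Fin n) (Fin n) R) ∈ M := hsq s 1 hone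
    have t2 : (s + 1) ^ 2 • (-(s • (1 : Matrix (Fin n) (Fin n) R))) ∈ M := hsq _ _ h2
    have t3 : s ^ 2 • (s • (1 : Matrix (Fin n) (Fin n) R)) ∈ M := hsq _ _ h1
    have hsum := hadd _ (hadd _ (hadd _ t1 _ t2) _ t3) _ h1
    have e : s ^ 2 • (1 : Matrix (Fin n) (Fin n) R) + (s + 1) ^ 2 • (-(s • 1))
        + s ^ 2 • (s • 1) + s • 1 = -(s ^ 2 • (1 : Matrix (Fin n) (Fin n) R)) := by
      rw [smul_neg, smul_smul, smul_smul, ← neg_smul, ← neg_smul, ← add_smul, ← add_smul,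
        ← add_smul]
      congr 1
      ring
    rwa [e] at hsum
  -- the (0,0)-entry of an element of M, as a scalar matrix, is in M
  have hentry : ∀ A ∈ M, (A 0 0) • (1 : Matrix (Fin n) (Fin n) R) ∈ M := by
    intro A hA
    have key : (A 0 0) • (1 : Matrix (Fin n) (Fin n) R)
        = ∑ i : Fin n, (single (0 : Fin n) i (1:R))ᵀ * A * single 0 i 1 := by
      ext a b
      simp only [Matrix.sum_apply, Matrix.mul_apply, Matrix.single_apply, Matrix.transpose_apply,
        Matrix.smul_apply, Matrix.one_apply, Matrix.of_apply, ite_and, smul_eq_mul]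
      simp [Finset.sum_ite_eq, Finset.sum_ite_eq', eq_comm]
    rw [key]
    exact Finset.sum_induction _ (· ∈ M) (fun a b ha hb => hadd a ha b hb) hzero
      (fun i _ => hcong _ A hA)
  -- symmetric scalar matrices
  have hsymm1 : ∀ c : R, (-(c • (1 : Matrix (Fin n) (Fin n) R))).IsSymm := by
    intro c
    simp [Matrix.IsSymm]
  -- helper: if -(c^2)•1 ∈ M then c•1 ∈ M ∩ -M
  have hkey : ∀ c : R, -(c ^ 2 • (1 : Matrix (Fin n) (Fin n) R)) ∈ M →
      c • (1 : Matrix (Fin n) (Fin n) R) ∈ M ∩ -M := by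
    intro c hc
    have h := hprime (-(1 : Matrix (Fin n) (Fin n) R)) c (by simp [Matrix.IsSymm]) ?_
    · rcases h with h | h
      · exact absurd h hproper
      · exact h
    · rw [smul_neg]
      simpa using hc
  refine ⟨{ carrier := {r : R | r • (1 : Matrix (Fin n) (Fin n) R) ∈ M ∩ -M}
            , add_mem' := ?_, zero_mem' := ?_, smul_mem' := ?_ }, ?_, ?_⟩
  · -- add_mem'
    rintro a b ⟨ha1, ha2⟩ ⟨hb1, hb2⟩
    constructor
    · rw [add_smul]
      exact hadd _ ha1 _ hb1
    · rw [Set.mem_neg, add_smul, neg_add]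
      exact hadd _ (Set.mem_neg.mp ha2) _ (Set.mem_neg.mp hb2)
  · -- zero_mem'
    constructor
    · simpa using hzero
    · rw [Set.mem_neg]; simpa using hzero
  · -- smul_mem'
    intro c x hx
    have hc2 : -((c * x) ^ 2 • (1 : Matrix (Fin n) (Fin n) R)) ∈ M := by
      have h := hsq c _ (hcrux x hx)
      rw [smul_neg, smul_smul] at h
      have e : c ^ 2 * x ^ 2 = (c * x) ^ 2 := by ring
      rwa [e] at h
    have := hkey (c * x) hc2
    simpa [smul_eq_mul] using this
  · -- set equality with the image
    ext r
    constructor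
    · intro hr
      exact ⟨r • 1, hr, by simp⟩
    · rintro ⟨A, hA, rfl⟩
      constructor
      · exact hentry A hA.1
      · rw [Set.mem_neg]
        have h := hentry (-A) (Set.mem_neg.mp hA.2)
        simpa [neg_smul] using h
  · -- primality
    constructor
    · -- ne_top
      intro h
      have h1 : (1 : R) • (1 : Matrix (Fin n) (Fin n) R) ∈ M ∩ -M := by
        have ht : (1 : R) ∈ (⊤ : Ideal R) := Submodule.mem_top
        rw [← h] at ht
        exact ht
      exact hproper (by simpa using Set.mem_neg.mp h1.2)
    · -- mem_or_mem
      intro a b hab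
      have hab' : (a * b) • (1 : Matrix (Fin n) (Fin n) R) ∈ M ∩ -M := hab
      have hc : -((a * b) ^ 2 • (1 : Matrix (Fin n) (Fin n) R)) ∈ M := hcrux _ hab'
      have hstep : b ^ 2 • (-(a ^ 2 • (1 : Matrix (Fin n) (Fin n) R))) ∈ M := by
        rw [smul_neg, smul_smul]
        have e : b ^ 2 * a ^ 2 = (a * b) ^ 2 := by ring
        rwa [e]
      have h := hprime (-(a ^ 2 • (1 : Matrix (Fin n) (Fin n) R))) b (hsymm1 _) hstep
      rcases h with h | h
      · -- -(a^2)•1 ∈ M, so a ∈ S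
        left
        exact hkey a h
      · right
        exact h
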